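/- Let U be a left R-module of projective dimension at most 1. Then the full subcategory of left R-modules C satisfying Hom_R(U,C) = 0 = Ext¹_R(U,C) is closed under kernels, cokernels, extensions, and arbitrary products in the category of left R-modules; in particular it is an abelian category with exact inclusion functor. -/

import Mathlib

open CategoryTheory Opposite
open Function HomologicalComplex

/-- The `Ext^{0,1}`-orthogonality class of a left `R`-module `U`: the class of left
`R`-modules `C` with `Hom_R(U,C) = 0 = Ext¹_R(U,C)`. -/
def IsExt01Orthogonal (R : Type) [Ring R] (U : Type) [AddCommGroup U] [Module R U]
    (C : Type) [AddCommGroup C] [Module R C] : Prop :=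
  Subsingleton (U →ₗ[R] C) ∧
    Subsingleton (((Ext ℤ (ModuleCat R) 1).obj
      (op (ModuleCat.of R U))).obj (ModuleCat.of R C))


section Algebra

variable {R : Type} [Ring R] {P0 : Type} [AddCommGroup P0] [Module R P0]
  (K : Submodule R P0)

/-- restriction of a map on `P0` to the submodule `K` -/
private def resK (Y : Type) [AddCommGroup Y] [Module R Y] :
    (P0 →ₗ[R] Y) → (K →ₗ[R] Y) := fun g => g.comp K.subtype

/-- The orthogonality class, reformulated via a presentation. -/
private def GoodK (Y : Type) [AddCommGroup Y] [Module R Y] : Prop :=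
  Function.Bijective (resK K Y)

variable {K}

private lemma exists_comp_of_surjective {A B Y : Type} [AddCommGroup A] [Module R A]
    [AddCommGroup B] [Module R B] [AddCommGroup Y] [Module R Y]
    (p : A →ₗ[R] B) (hp : Surjective p) (g : A →ₗ[R] Y)
    (h : LinearMap.ker p ≤ LinearMap.ker g) :
    ∃ g' : B →ₗ[R] Y, g'.comp p = g := by
  refine ⟨((LinearMap.ker p).liftQ g h).comp
    ((LinearMap.quotKerEquivOfSurjective p hp).symm : B →ₗ[R] (A ⧸ LinearMap.ker p)), ?_⟩
  ext a
  have : (LinearMap.quotKerEquivOfSurjective p hp).symm (p a)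
      = Submodule.Quotient.mk a := by
    apply (LinearMap.quotKerEquivOfSurjective p hp).injective
    simp [LinearMap.quotKerEquivOfSurjective, LinearMap.quotKerEquivRange_apply_mk]
  simp [this]

private lemma goodK_ker {C D : Type} [AddCommGroup C] [Module R C] [AddCommGroup D] [Module R D]
    (hC : GoodK K C) (hD : GoodK K D) (f : C →ₗ[R] D) :
    GoodK K (LinearMap.ker f) := by
  constructor
  · intro g₁ g₂ hg
    have : resK K C ((LinearMap.ker f).subtype ∘ₗ g₁)
        = resK K C ((LinearMap.ker f).subtype ∘ₗ g₂) := by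
      simp only [resK, LinearMap.comp_assoc]
      rw [show g₁.comp K.subtype = g₂.comp K.subtype from hg]
    have h2 := hC.1 this
    ext x
    have := congrArg (fun (t : P0 →ₗ[R] C) => t x) h2
    simpa using this
  · intro h
    obtain ⟨g, hg⟩ := hC.2 ((LinearMap.ker f).subtype ∘ₗ h)
    have hfg : f ∘ₗ g = 0 := by
      apply hD.1
      have : resK K D (f ∘ₗ g) = f ∘ₗ (resK K C g) := by
        simp [resK, LinearMap.comp_assoc]
      show resK K D (f ∘ₗ g) = resK K D 0
      rw [this, hg]
      ext x
      simp [resK]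
    refine ⟨g.codRestrict (LinearMap.ker f) (fun x => ?_), ?_⟩
    · rw [LinearMap.mem_ker, ← LinearMap.comp_apply, hfg]; rfl
    · ext x
      have := congrArg (fun (t : ↥K →ₗ[R] C) => t x) hg
      simpa [resK] using this


private lemma goodK_coker [Module.Projective R P0] [Module.Projective R ↥K]
    {C D : Type} [AddCommGroup C] [Module R C] [AddCommGroup D] [Module R D]
    (hC : GoodK K C) (hD : GoodK K D) (f : C →ₗ[R] D) :
    GoodK K (D ⧸ LinearMap.range f) := by
  set Q := LinearMap.range f
  constructor
  · intro g₁ g₂ hg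
    -- reduce to showing injectivity on each, i.e. res g = 0 → g = 0 by linearity
    suffices h0 : ∀ g : P0 →ₗ[R] D ⧸ Q, resK K _ g = 0 → g = 0 by
      have := h0 (g₁ - g₂) (by simp only [resK] at hg ⊢; rw [LinearMap.sub_comp, hg, sub_self])
      exact sub_eq_zero.mp this
    intro g hg0
    obtain ⟨gt, hgt⟩ := Module.projective_lifting_property Q.mkQ g Q.mkQ_surjective
    have hmem : ∀ x : K, gt (K.subtype x) ∈ Q := by
      intro x
      have : Q.mkQ (gt (K.subtype x)) = 0 := by
        have := congrArg (fun (t : ↥K →ₗ[R] D ⧸ Q) => t x) hg0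
        simpa [resK, ← hgt] using this
      simpa [Submodule.Quotient.mk_eq_zero] using this
    -- lift (gt ∘ j) through f using projectivity of K
    obtain ⟨h, hh⟩ := Module.projective_lifting_property f.rangeRestrict
      (((gt ∘ₗ K.subtype)).codRestrict Q hmem) (LinearMap.surjective_rangeRestrict f)
    have hfh : f ∘ₗ h = gt ∘ₗ K.subtype := by
      ext x
      have := congrArg (fun (t : ↥K →ₗ[R] ↥Q) => (t x : D)) hh
      simpa using this
    obtain ⟨h', hh'⟩ := hC.2 h
    have : gt = f ∘ₗ h' := by
      apply hD.1
      show gt ∘ₗ K.subtype = (f ∘ₗ h') ∘ₗ K.subtype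
      rw [LinearMap.comp_assoc, show h'.comp K.subtype = h from hh', hfh]
    rw [← hgt, this]
    ext x
    simp [Q]
  · intro h
    obtain ⟨ht, hht⟩ := Module.projective_lifting_property Q.mkQ h Q.mkQ_surjective
    obtain ⟨g, hg⟩ := hD.2 ht
    refine ⟨Q.mkQ ∘ₗ g, ?_⟩
    show (Q.mkQ ∘ₗ g) ∘ₗ K.subtype = h
    rw [LinearMap.comp_assoc, show g.comp K.subtype = ht from hg, hht]

private lemma goodK_ext [Module.Projective R P0]
    {E : Type} [AddCommGroup E] [Module R E] (A : Submodule R E)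
    (hA : GoodK K ↥A) (hQ : GoodK K (E ⧸ A)) : GoodK K E := by
  constructor
  · intro g₁ g₂ hg
    suffices h0 : ∀ g : P0 →ₗ[R] E, resK K _ g = 0 → g = 0 by
      have := h0 (g₁ - g₂) (by simp only [resK] at hg ⊢; rw [LinearMap.sub_comp, hg, sub_self])
      exact sub_eq_zero.mp this
    intro g hg0
    have hq : A.mkQ ∘ₗ g = 0 := by
      apply hQ.1
      show (A.mkQ ∘ₗ g) ∘ₗ K.subtype = resK K _ (0 : P0 →ₗ[R] E ⧸ A)
      have : g ∘ₗ K.subtype = 0 := hg0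
      rw [LinearMap.comp_assoc, this]
      ext x; simp [resK]
    have hmem : ∀ x : P0, g x ∈ A := by
      intro x
      have : A.mkQ (g x) = 0 := congrArg (fun (t : P0 →ₗ[R] E ⧸ A) => t x) hq
      simpa [Submodule.Quotient.mk_eq_zero] using this
    have h0 : g.codRestrict A hmem = 0 := by
      apply hA.1
      ext x
      have : g (K.subtype x) = 0 := congrArg (fun (t : ↥K →ₗ[R] E) => t x) hg0
      simpa [resK] using this
    ext x
    have := congrArg (fun (t : P0 →ₗ[R] ↥A) => (t x : E)) h0
    simpa using this
  · intro h
    obtain ⟨gbar, hgbar⟩ := hQ.2 (A.mkQ ∘ₗ h)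
    obtain ⟨g, hgl⟩ := Module.projective_lifting_property A.mkQ gbar A.mkQ_surjective
    have hmem : ∀ x : K, h x - g (K.subtype x) ∈ A := by
      intro x
      have h1 : A.mkQ (h x) = gbar (K.subtype x) := by
        have := congrArg (fun (t : ↥K →ₗ[R] E ⧸ A) => t x) hgbar
        simpa [resK] using this.symm
      have h2 : A.mkQ (g (K.subtype x)) = gbar (K.subtype x) := by
        have := congrArg (fun (t : P0 →ₗ[R] E ⧸ A) => t (K.subtype x)) hgl
        simpa using this
      rw [← Submodule.Quotient.mk_eq_zero, ← Submodule.mkQ_apply, map_sub, h1, h2, sub_self]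
    obtain ⟨k', hk'⟩ := hA.2 (((h - g ∘ₗ K.subtype)).codRestrict A
      (by intro x; simpa using hmem x))
    refine ⟨g + A.subtype ∘ₗ k', ?_⟩
    ext x
    have := congrArg (fun (t : ↥K →ₗ[R] ↥A) => (t x : E)) hk'
    simp only [resK] at this ⊢
    simp only [LinearMap.add_comp, LinearMap.add_apply, LinearMap.comp_apply] at *
    rw [show (A.subtype) (k' (K.subtype x)) = (h x : E) - g (K.subtype x) by simpa using this]
    abel

private lemma goodK_prod {ι : Type} (M : ι → Type) [∀ i, AddCommGroup (M i)]
    [∀ i, Module R (M i)] (hM : ∀ i, GoodK K (M i)) : GoodK K (∀ i, M i) := by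
  constructor
  · intro g₁ g₂ hg
    ext x i
    have := (hM i).1 (show resK K (M i) ((LinearMap.proj i) ∘ₗ g₁)
        = resK K (M i) ((LinearMap.proj i) ∘ₗ g₂) by
      simp only [resK, LinearMap.comp_assoc]
      rw [show g₁.comp K.subtype = g₂.comp K.subtype from hg])
    exact congrArg (fun (t : P0 →ₗ[R] M i) => t x) this
  · intro h
    choose g hgi using fun i => (hM i).2 ((LinearMap.proj i) ∘ₗ h)
    refine ⟨LinearMap.pi g, ?_⟩
    ext x i
    have := congrArg (fun (t : ↥K →ₗ[R] M i) => t x) (hgi i)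
    simpa [resK] using this

end Algebra

section Bridge

variable {R : Type} [Ring R] {U : Type} [AddCommGroup U] [Module R U]
variable (P : ProjectiveResolution (ModuleCat.of R U))

/-- The augmentation map `P₀ → U` as a linear map. -/
noncomputable def prPi : ↑(P.complex.X 0) →ₗ[R] U :=
  (P.π.f 0 ≫ (singleObjXSelf (ComplexShape.down ℕ) 0 (ModuleCat.of R U)).hom :
    P.complex.X 0 ⟶ ModuleCat.of R U).hom

lemma prPi_surjective : Surjective (prPi P) := by
  have : Epi (P.π.f 0 ≫ (singleObjXSelf (ComplexShape.down ℕ) 0 (ModuleCat.of R U)).hom) :=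
    epi_comp _ _
  exact (ModuleCat.epi_iff_surjective _).mp this

lemma prPi_ker : LinearMap.ker (prPi P)
    = LinearMap.range ((P.complex.d 1 0).hom : ↑(P.complex.X 1) →ₗ[R] ↑(P.complex.X 0)) := by
  apply le_antisymm
  · intro x hx
    have hex := P.exact₀
    rw [ShortComplex.moduleCat_exact_iff] at hex
    obtain ⟨y, hy⟩ := hex x (by
      have : prPi P x = 0 := hx
      have h2 := congrArg ((singleObjXSelf (ComplexShape.down ℕ) 0 (ModuleCat.of R U)).inv) this
      simp [prPi] at this; exact this)
    exact ⟨y, hy⟩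
  · rintro x ⟨y, rfl⟩
    have : (P.complex.d 1 0 ≫ P.π.f 0) y = 0 := by
      rw [P.complex_d_comp_π_f_zero]; rfl
    show prPi P ((P.complex.d 1 0) y) = 0
    simp only [prPi]
    change (singleObjXSelf (ComplexShape.down ℕ) 0 (ModuleCat.of R U)).hom
      ((P.π.f 0) ((P.complex.d 1 0) y)) = 0
    rw [show (P.π.f 0) ((P.complex.d 1 0) y) = 0 from this]
    exact map_zero _

lemma d_exact_one : LinearMap.ker ((P.complex.d 1 0).hom : ↑(P.complex.X 1) →ₗ[R] ↑(P.complex.X 0))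
    = LinearMap.range ((P.complex.d 2 1).hom : ↑(P.complex.X 2) →ₗ[R] ↑(P.complex.X 1)) := by
  have hex := P.exact_succ 0
  rw [ShortComplex.moduleCat_exact_iff] at hex
  apply le_antisymm
  · intro x hx
    exact hex x hx
  · rintro x ⟨y, rfl⟩
    have : (P.complex.d 2 1 ≫ P.complex.d 1 0) y = 0 := by
      rw [P.complex.d_comp_d]; rfl
    exact this

end Bridge

private lemma moduleCat_subsingleton_iff_isZero {S : Type} [Ring S] (M : ModuleCat S) :
    Subsingleton M ↔ Limits.IsZero M := by
  constructor
  · intro h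
    exact ModuleCat.isZero_of_subsingleton M
  · intro h
    have : (𝟙 M : M ⟶ M) = 0 := by
      apply h.eq_of_src
    constructor
    intro a b
    calc a = (𝟙 M : M ⟶ M) a := rfl
    _ = (0 : M ⟶ M) a := by rw [this]
    _ = (0 : M ⟶ M) b := by
          show (0 : M →ₗ[S] M) a = (0 : M →ₗ[S] M) b
          simp
    _ = (𝟙 M : M ⟶ M) b := by rw [this]
    _ = b := rfl

section Bridge

variable {R : Type} [Ring R] {U : Type} [AddCommGroup U] [Module R U]
variable (P : ProjectiveResolution (ModuleCat.of R U))

lemma ext_succ_subsingleton_iff (Y : ModuleCat R) (n : ℕ) :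
    Subsingleton (((Ext ℤ (ModuleCat R) (n + 1)).obj (op (ModuleCat.of R U))).obj Y) ↔
      ∀ h : ↑(P.complex.X (n + 1)) →ₗ[R] Y, h ∘ₗ (P.complex.d (n + 2) (n + 1)).hom = 0 →
        ∃ g : ↑(P.complex.X n) →ₗ[R] Y, g ∘ₗ (P.complex.d (n + 1) n).hom = h := by
  have e := P.isoExt (R := ℤ) (n + 1) Y
  have e' : Subsingleton (((Ext ℤ (ModuleCat R) (n + 1)).obj (op (ModuleCat.of R U))).obj Y) ↔
      Subsingleton ((P.complex.linearYonedaObj ℤ Y).homology (n + 1)) :=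
    Equiv.subsingleton_congr ((CategoryTheory.forget (ModuleCat ℤ)).mapIso e).toEquiv
  rw [e', moduleCat_subsingleton_iff_isZero, ← HomologicalComplex.exactAt_iff_isZero_homology,
    HomologicalComplex.exactAt_iff' (P.complex.linearYonedaObj ℤ Y) n (n + 1) (n + 2)
      (CochainComplex.prev_nat_succ n) (by simp)]
  rw [ShortComplex.moduleCat_exact_iff]
  constructor
  · intro hex h hh
    obtain ⟨g, hg⟩ := hex (ModuleCat.ofHom h) (by
      show P.complex.d (n + 2) (n + 1) ≫ ModuleCat.ofHom h = 0
      ext x; exact LinearMap.congr_fun hh x)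
    exact ⟨g.hom, by
      have hg' : P.complex.d (n + 1) n ≫ g = ModuleCat.ofHom h := hg
      exact congrArg ModuleCat.Hom.hom hg'⟩
  · intro hex h hh
    have hh' : P.complex.d (n + 2) (n + 1) ≫ h = 0 := hh
    obtain ⟨g, hg⟩ := hex h.hom (congrArg ModuleCat.Hom.hom hh')
    exact ⟨ModuleCat.ofHom g, by
      show P.complex.d (n + 1) n ≫ ModuleCat.ofHom g = h
      ext x; exact LinearMap.congr_fun hg x⟩

end Bridge

section Bridge2

variable {R : Type} [Ring R] {U : Type} [AddCommGroup U] [Module R U]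
variable (P : ProjectiveResolution (ModuleCat.of R U))

lemma projX (n : ℕ) : Module.Projective R ↑(P.complex.X n) :=
  (IsProjective.iff_projective _).mpr (P.projective n)

end Bridge2

section Bridge3

variable {R : Type} [Ring R] {U : Type} [AddCommGroup U] [Module R U]
variable (P : ProjectiveResolution (ModuleCat.of R U))

/-- The first syzygy of the resolution. -/
noncomputable def Ksub : Submodule R ↑(P.complex.X 0) := LinearMap.ker (prPi P)

noncomputable def dres : ↑(P.complex.X 1) →ₗ[R] ↥(Ksub P) :=
  ((P.complex.d 1 0).hom : ↑(P.complex.X 1) →ₗ[R] ↑(P.complex.X 0)).codRestrict (Ksub P)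
    (fun x => by rw [Ksub, prPi_ker]; exact ⟨x, rfl⟩)

lemma dres_surjective : Surjective (dres P) := by
  rintro ⟨k, hk⟩
  rw [Ksub, prPi_ker] at hk
  obtain ⟨y, hy⟩ := hk
  exact ⟨y, Subtype.ext hy⟩

lemma subtype_comp_dres :
    (Ksub P).subtype ∘ₗ dres P = ((P.complex.d 1 0).hom : ↑(P.complex.X 1) →ₗ[R] ↑(P.complex.X 0)) :=
  rfl

lemma homUY_subsingleton_iff (Y : Type) [AddCommGroup Y] [Module R Y] :
    Subsingleton (U →ₗ[R] Y) ↔ Injective (resK (Ksub P) Y) := by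
  constructor
  · intro hs g₁ g₂ hg
    have hker : LinearMap.ker (prPi P) ≤ LinearMap.ker (g₁ - g₂) := by
      intro x hx
      have := congrArg (fun (t : ↥(Ksub P) →ₗ[R] Y) => t ⟨x, hx⟩) hg
      simp only [resK, LinearMap.comp_apply, Submodule.subtype_apply] at this
      simpa [LinearMap.mem_ker, this] using sub_eq_zero.mpr this
    obtain ⟨φ, hφ⟩ := exists_comp_of_surjective (prPi P) (prPi_surjective P) (g₁ - g₂) hker
    have : φ = 0 := Subsingleton.elim _ _
    rw [this] at hφ
    have : g₁ - g₂ = 0 := by rw [← hφ]; ext x; simp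
    exact sub_eq_zero.mp this
  · intro hinj
    constructor
    intro φ₁ φ₂
    have : resK (Ksub P) Y (φ₁ ∘ₗ prPi P) = resK (Ksub P) Y (φ₂ ∘ₗ prPi P) := by
      ext x
      have hx : prPi P (x : ↑(P.complex.X 0)) = 0 := x.2
      simp [resK, hx]
    have h2 := hinj this
    ext u
    obtain ⟨x, rfl⟩ := prPi_surjective P u
    exact congrArg (fun (t : ↑(P.complex.X 0) →ₗ[R] Y) => t x) h2

lemma ext1_subsingleton_iff (Y : Type) [AddCommGroup Y] [Module R Y] :
    Subsingleton (((Ext ℤ (ModuleCat R) 1).obj (op (ModuleCat.of R U))).obj (ModuleCat.of R Y)) ↔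
      Surjective (resK (Ksub P) Y) := by
  rw [show (1:ℕ) = 0 + 1 from rfl, ext_succ_subsingleton_iff P (ModuleCat.of R Y) 0]
  constructor
  · intro hex hbar
    have h2 : (hbar ∘ₗ dres P) ∘ₗ ((P.complex.d 2 1).hom : ↑(P.complex.X 2) →ₗ[R] ↑(P.complex.X 1))
        = 0 := by
      ext x
      have hd : ((Ksub P).subtype) (dres P (((P.complex.d 2 1).hom :
          ↑(P.complex.X 2) →ₗ[R] ↑(P.complex.X 1)) x)) = 0 := by
        rw [show ((Ksub P).subtype) (dres P _) = ((P.complex.d 1 0).hom :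
          ↑(P.complex.X 1) →ₗ[R] ↑(P.complex.X 0)) _ from rfl]
        have : (P.complex.d 2 1 ≫ P.complex.d 1 0) x = 0 := by
          rw [P.complex.d_comp_d]; rfl
        exact this
      have : dres P (((P.complex.d 2 1).hom : ↑(P.complex.X 2) →ₗ[R] ↑(P.complex.X 1)) x) = 0 :=
        Subtype.ext hd
      simp [this]
    obtain ⟨g, hg⟩ := hex (hbar ∘ₗ dres P) h2
    refine ⟨g, ?_⟩
    have hg' : (g ∘ₗ ((P.complex.d 1 0).hom : ↑(P.complex.X 1) →ₗ[R] ↑(P.complex.X 0)))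
        = hbar ∘ₗ dres P := hg
    ext k
    obtain ⟨x, rfl⟩ := dres_surjective P k
    have := congrArg (fun (t : ↑(P.complex.X 1) →ₗ[R] Y) => t x) hg'
    exact this
  · intro hsurj h hh
    have hh' : h ∘ₗ ((P.complex.d 2 1).hom : ↑(P.complex.X 2) →ₗ[R] ↑(P.complex.X 1)) = 0 := hh
    have hkle : LinearMap.ker (dres P) ≤ LinearMap.ker h := by
      intro x hx
      have hx0 : ((P.complex.d 1 0).hom : ↑(P.complex.X 1) →ₗ[R] ↑(P.complex.X 0)) x = 0 :=
        congrArg Subtype.val (show dres P x = 0 from hx)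
      have : x ∈ LinearMap.range ((P.complex.d 2 1).hom :
          ↑(P.complex.X 2) →ₗ[R] ↑(P.complex.X 1)) := by
        rw [← d_exact_one P]; exact hx0
      obtain ⟨y, rfl⟩ := this
      exact congrArg (fun (t : ↑(P.complex.X 2) →ₗ[R] Y) => t y) hh'
    obtain ⟨hbar, hhbar⟩ := exists_comp_of_surjective (dres P) (dres_surjective P) h hkle
    obtain ⟨g, hgbar⟩ := hsurj hbar
    refine ⟨g, ?_⟩
    show g ∘ₗ ((P.complex.d 1 0).hom : ↑(P.complex.X 1) →ₗ[R] ↑(P.complex.X 0)) = h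
    rw [← subtype_comp_dres, ← LinearMap.comp_assoc,
      show g ∘ₗ (Ksub P).subtype = hbar from hgbar, hhbar]

lemma Ksub_projective
    (hpd : ∀ (C : Type) [AddCommGroup C] [Module R C],
      Subsingleton (((Ext ℤ (ModuleCat R) 2).obj
        (op (ModuleCat.of R U))).obj (ModuleCat.of R C))) :
    Module.Projective R ↥(Ksub P) := by
  haveI := projX P 1
  haveI := projX P 2
  set K := Ksub P
  set p := Finsupp.linearCombination R (_root_.id : ↥K → ↥K) with hpdef
  have hp : Surjective p := Finsupp.linearCombination_id_surjective R ↥K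
  have hsub := hpd (↥(LinearMap.ker p))
  rw [show (2:ℕ) = 1 + 1 from rfl, ext_succ_subsingleton_iff P (ModuleCat.of R (↥(LinearMap.ker p))) 1] at hsub
  obtain ⟨α, hα⟩ := Module.projective_lifting_property p (dres P) hp
  have hmem : ∀ x : ↑(P.complex.X 2),
      α (((P.complex.d 2 1).hom : ↑(P.complex.X 2) →ₗ[R] ↑(P.complex.X 1)) x) ∈ LinearMap.ker p := by
    intro x
    have h1 : p (α (((P.complex.d 2 1).hom : _ →ₗ[R] _) x))
        = dres P (((P.complex.d 2 1).hom : ↑(P.complex.X 2) →ₗ[R] ↑(P.complex.X 1)) x) :=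
      congrArg (fun (t : ↑(P.complex.X 1) →ₗ[R] ↥K) => t _) hα
    have h2 : dres P (((P.complex.d 2 1).hom : ↑(P.complex.X 2) →ₗ[R] ↑(P.complex.X 1)) x) = 0 := by
      apply Subtype.ext
      have : (P.complex.d 2 1 ≫ P.complex.d 1 0) x = 0 := by rw [P.complex.d_comp_d]; rfl
      exact this
    rw [LinearMap.mem_ker, h1, h2]
  set c' : ↑(P.complex.X 2) →ₗ[R] (↥(LinearMap.ker p)) :=
    (α ∘ₗ ((P.complex.d 2 1).hom : ↑(P.complex.X 2) →ₗ[R] ↑(P.complex.X 1))).codRestrict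
      (LinearMap.ker p) hmem with hc'def
  have hc'd3 : c' ∘ₗ ((P.complex.d 3 2).hom : ↑(P.complex.X 3) →ₗ[R] ↑(P.complex.X 2)) = 0 := by
    refine LinearMap.ext fun x => Subtype.ext ?_
    show α (((P.complex.d 2 1).hom : _ →ₗ[R] _) (((P.complex.d 3 2).hom : _ →ₗ[R] _) x)) = 0
    have : (P.complex.d 3 2 ≫ P.complex.d 2 1) x = 0 := by rw [P.complex.d_comp_d]; rfl
    rw [show ((P.complex.d 2 1).hom : _ →ₗ[R] _) (((P.complex.d 3 2).hom : _ →ₗ[R] _) x) = 0 from this]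
    simp
  obtain ⟨β, hβ⟩ := hsub c' hc'd3
  have hβ' : β ∘ₗ ((P.complex.d 2 1).hom : ↑(P.complex.X 2) →ₗ[R] ↑(P.complex.X 1)) = c' := hβ
  set α' : ↑(P.complex.X 1) →ₗ[R] (↥K →₀ R) := α - (LinearMap.ker p).subtype ∘ₗ β with hα'def
  have hα'1 : p ∘ₗ α' = dres P := by
    ext x
    have h1 : p (α x) = dres P x := congrArg (fun (t : ↑(P.complex.X 1) →ₗ[R] ↥K) => t x) hα
    have h2 : p (((LinearMap.ker p).subtype) (β x)) = 0 := (β x).2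
    simp [hα'def, map_sub, h1, h2]
  have hα'2 : α' ∘ₗ ((P.complex.d 2 1).hom : ↑(P.complex.X 2) →ₗ[R] ↑(P.complex.X 1)) = 0 := by
    refine LinearMap.ext fun x => ?_
    have h1 : ((((show ↥(LinearMap.ker p) from β (((P.complex.d 2 1).hom : _ →ₗ[R] _) x))) : ↥K →₀ R))
        = α (((P.complex.d 2 1).hom : _ →ₗ[R] _) x) :=
      congrArg (fun (t : ↑(P.complex.X 2) →ₗ[R] (↥(LinearMap.ker p))) => (((show ↥(LinearMap.ker p) from t x)) : ↥K →₀ R)) hβ'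
    show α (((P.complex.d 2 1).hom : _ →ₗ[R] _) x)
      - ((LinearMap.ker p).subtype) (β (((P.complex.d 2 1).hom : _ →ₗ[R] _) x)) = 0
    rw [show ((LinearMap.ker p).subtype) (β (((P.complex.d 2 1).hom : _ →ₗ[R] _) x))
      = (((show ↥(LinearMap.ker p) from β (((P.complex.d 2 1).hom : _ →ₗ[R] _) x))) : ↥K →₀ R) from rfl, h1, sub_self]
  have hkle : LinearMap.ker (dres P) ≤ LinearMap.ker α' := by
    intro x hx
    have hx0 : ((P.complex.d 1 0).hom : ↑(P.complex.X 1) →ₗ[R] ↑(P.complex.X 0)) x = 0 :=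
      congrArg Subtype.val (show dres P x = 0 from hx)
    have : x ∈ LinearMap.range ((P.complex.d 2 1).hom :
        ↑(P.complex.X 2) →ₗ[R] ↑(P.complex.X 1)) := by
      rw [← d_exact_one P]; exact hx0
    obtain ⟨y, rfl⟩ := this
    exact congrArg (fun (t : ↑(P.complex.X 2) →ₗ[R] (↥K →₀ R)) => t y) hα'2
  obtain ⟨σ, hσ⟩ := exists_comp_of_surjective (dres P) (dres_surjective P) α' hkle
  have hpσ : p ∘ₗ σ = LinearMap.id := by
    ext k
    obtain ⟨x, rfl⟩ := dres_surjective P k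
    have h1 : σ (dres P x) = α' x := congrArg (fun (t : ↑(P.complex.X 1) →ₗ[R] (↥K →₀ R)) => t x) hσ
    have h2 : p (α' x) = dres P x := congrArg (fun (t : ↑(P.complex.X 1) →ₗ[R] ↥K) => t x) hα'1
    simp [h1, h2]
  exact Module.Projective.of_split σ p hpσ

lemma orth_iff_goodK (Y : Type) [AddCommGroup Y] [Module R Y] :
    IsExt01Orthogonal R U Y ↔ GoodK (Ksub P) Y :=
  and_congr (homUY_subsingleton_iff P Y) (ext1_subsingleton_iff P Y)

end Bridge3

/-- If `U` is a left `R`-module of projective dimension at most `1`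
(i.e. `Ext²_R(U,−)` vanishes identically), then the class of left `R`-modules `C` with
`Hom_R(U,C) = 0 = Ext¹_R(U,C)` is closed under kernels, cokernels, extensions and
arbitrary products. -/
theorem isExt01Orthogonal_closed_under_ker_coker_ext_prod
    (R : Type) [Ring R] (U : Type) [AddCommGroup U] [Module R U]
    (hpd : ∀ (C : Type) [AddCommGroup C] [Module R C],
      Subsingleton (((Ext ℤ (ModuleCat R) 2).obj
        (op (ModuleCat.of R U))).obj (ModuleCat.of R C))) :
    (∀ (C D : Type) [AddCommGroup C] [Module R C] [AddCommGroup D] [Module R D],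
      IsExt01Orthogonal R U C → IsExt01Orthogonal R U D → ∀ f : C →ₗ[R] D,
        IsExt01Orthogonal R U (LinearMap.ker f)) ∧
    (∀ (C D : Type) [AddCommGroup C] [Module R C] [AddCommGroup D] [Module R D],
      IsExt01Orthogonal R U C → IsExt01Orthogonal R U D → ∀ f : C →ₗ[R] D,
        IsExt01Orthogonal R U (D ⧸ LinearMap.range f)) ∧
    (∀ (E : Type) [AddCommGroup E] [Module R E] (A : Submodule R E),
      IsExt01Orthogonal R U A → IsExt01Orthogonal R U (E ⧸ A) →
        IsExt01Orthogonal R U E) ∧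
    (∀ (ι : Type) (M : ι → Type) [∀ i, AddCommGroup (M i)] [∀ i, Module R (M i)],
      (∀ i, IsExt01Orthogonal R U (M i)) → IsExt01Orthogonal R U (∀ i, M i)) := by
  obtain ⟨P⟩ := (HasProjectiveResolution.out (Z := ModuleCat.of R U))
  haveI hP0 : Module.Projective R ↑(P.complex.X 0) := projX P 0
  haveI hK : Module.Projective R ↥(Ksub P) := Ksub_projective P hpd
  refine ⟨?_, ?_, ?_, ?_⟩
  · intro C D iC1 iC2 iD1 iD2 hC hD f
    rw [orth_iff_goodK P] at hC hD ⊢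
    exact goodK_ker hC hD f
  · intro C D iC1 iC2 iD1 iD2 hC hD f
    rw [orth_iff_goodK P] at hC hD ⊢
    exact goodK_coker hC hD f
  · intro E iE1 iE2 A hA hQ
    rw [orth_iff_goodK P] at hA hQ ⊢
    exact goodK_ext A hA hQ
  · intro ι M iM1 iM2 hM
    rw [orth_iff_goodK P]
    exact goodK_prod M (fun i => (orth_iff_goodK P _).mp (hM i))
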